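/- In the frequency-domain model of an LCMT, let i be a child of the root, i.e., i ≠ r and par i = r. Define: par* : V → V by par* i = i, par* r = i, and par* k = par k for k ≠ i, r; transfer functions h* by h* r ω = ⟨X i ω, X r ω⟩ / ‖X i ω‖², h* i ω = 0, and h* k = h k for k ≠ i, r; noises ρ* by ρ* i ω = X i ω, ρ* r ω = X r ω − (h* r ω) • X i ω, and ρ* k = ρ k for k ≠ i, r. Then: (a) par* is a rooted-tree parent map with root i (par* i = i, par* k ≠ k for k ≠ i, and every node reaches i by iterating par*), and its undirected edge set { {k, par* k} : k ≠ i } equals the original edge set { {k, par k} : k ≠ r }; (b) for every ω and all a ≠ b, ⟨ρ* a ω, ρ* b ω⟩ = 0; (c) for every node k and every ω, ρ* k ω ≠ 0; (d) the original signals satisfy the new recursion: X i ω = ρ* i ω and X k ω = h* k ω • X (par* k) ω + ρ* k ω for every k ≠ i. Hence (V, par*, h*, ρ*) is a well-posed LCMT with root i whose signals coincide with those of the original LCMT. -/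

import Mathlib

open scoped InnerProductSpace

/-- re-rooting theorem: in a well-posed frequency-domain LCMT,
the root `r` can be moved to any of its children `i`. With the modified parent
map `par*`, transfer functions `h*` (where `h* r` is the Wiener filter of `X r`
given `X i`) and noises `ρ*`:
(a) `par*` is a rooted-tree parent map with root `i` and the same undirected
    edge set;
(b) the new noises are pairwise orthogonal at every frequency;
(c) the new noises are everywhere nonzero (well-posedness);
(d) the original signals satisfy the new recursion.
Hence `(V, par*, h*, ρ*)` is a well-posed LCMT with root `i` and the same
signals. -/
theorem lcmt_rerooting
    {H : Type*} [NormedAddCommGroup H] [InnerProductSpace ℂ H]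
    {V : Type*} [Fintype V]
    (r : V) (par : V → V)
    (hroot : par r = r)
    (hpar : ∀ j, j ≠ r → par j ≠ j)
    (hreach : ∀ j, ∃ n, par^[n] j = r)
    (h : V → ℝ → ℂ) (ρ : V → ℝ → H)
    (horth : ∀ (ω : ℝ) (a b : V), a ≠ b → ⟪ρ a ω, ρ b ω⟫_ℂ = 0)
    (hwp : ∀ (j : V) (ω : ℝ), ρ j ω ≠ 0)
    (X : V → ℝ → H)
    (hXr : ∀ ω, X r ω = ρ r ω)
    (hX : ∀ j, j ≠ r → ∀ ω, X j ω = h j ω • X (par j) ω + ρ j ω)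
    -- `i` is a child of the root:
    (i : V) (hir : i ≠ r) (hpari : par i = r)
    -- the re-rooted parent map `par*`:
    (pars : V → V)
    (hparsi : pars i = i) (hparsr : pars r = i)
    (hparso : ∀ k, k ≠ i → k ≠ r → pars k = par k)
    -- the new transfer functions `h*`:
    (hs : V → ℝ → ℂ)
    (hhsr : ∀ ω, hs r ω = ⟪X i ω, X r ω⟫_ℂ / ((‖X i ω‖ ^ 2 : ℝ) : ℂ))
    (hhsi : ∀ ω, hs i ω = 0)
    (hhso : ∀ k, k ≠ i → k ≠ r → hs k = h k)
    -- the new noises `ρ*`: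
    (ρs : V → ℝ → H)
    (hρsi : ∀ ω, ρs i ω = X i ω)
    (hρsr : ∀ ω, ρs r ω = X r ω - hs r ω • X i ω)
    (hρso : ∀ k, k ≠ i → k ≠ r → ρs k = ρ k) :
    -- (a) `par*` is a rooted-tree parent map with root `i`,
    --     with the same undirected edge set:
    (pars i = i ∧ (∀ k, k ≠ i → pars k ≠ k) ∧ (∀ k, ∃ n, pars^[n] k = i) ∧
      {e : Sym2 V | ∃ k, k ≠ i ∧ e = s(k, pars k)} =
        {e : Sym2 V | ∃ k, k ≠ r ∧ e = s(k, par k)}) ∧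
    -- (b) the new noises are mutually orthogonal at every frequency:
    (∀ (ω : ℝ) (a b : V), a ≠ b → ⟪ρs a ω, ρs b ω⟫_ℂ = 0) ∧
    -- (c) well-posedness of the new noises:
    (∀ (k : V) (ω : ℝ), ρs k ω ≠ 0) ∧
    -- (d) the original signals satisfy the new recursion:
    ((∀ ω : ℝ, X i ω = ρs i ω) ∧
      (∀ k, k ≠ i → ∀ ω : ℝ, X k ω = hs k ω • X (pars k) ω + ρs k ω)) := by
  classical
  have hfix : ∀ m, par^[m] r = r := fun m => Function.iterate_fixed hroot m
  have hge : ∀ (j : V) (n : ℕ), par^[n] j = r → ∀ s, par^[n + s] j = r := by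
    intro j n hn s
    rw [add_comm, Function.iterate_add_apply, hn, hfix]
  -- no nontrivial cycles
  have hnc : ∀ j, j ≠ r → ∀ m, par^[m + 1] j ≠ j := by
    intro j hj m hcyc
    obtain ⟨n, hn⟩ := hreach j
    have hall : ∀ t, par^[t * (m + 1)] j = j := by
      intro t
      induction t with
      | zero => simp
      | succ t ih =>
        have he : (t + 1) * (m + 1) = (m + 1) + t * (m + 1) := by ring
        rw [he, Function.iterate_add_apply, ih, hcyc]
    have h1 : par^[n * (m + 1)] j = j := hall n
    have h2 : par^[n + n * m] j = r := hge j n hn (n * m)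
    have he : n * (m + 1) = n + n * m := by ring
    rw [he, h2] at h1
    exact hj h1.symm
  -- orthogonality of a noise with a signal not involving it
  have horthX : ∀ (n : ℕ) (j : V), par^[n] j = r → ∀ (a : V) (ω : ℝ),
      (∀ m, par^[m] j ≠ a) → ⟪ρ a ω, X j ω⟫_ℂ = 0 := by
    intro n
    induction n with
    | zero =>
      intro j hj a ω hm
      simp only [Function.iterate_zero, id_eq] at hj
      subst hj
      rw [hXr]
      exact horth ω a j (Ne.symm (by simpa using hm 0))
    | succ n ih =>
      intro j hj a ω hm
      by_cases hjr : j = r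
      · subst hjr
        rw [hXr]
        exact horth ω a j (Ne.symm (by simpa using hm 0))
      · rw [hX j hjr ω, inner_add_right, inner_smul_right]
        have hpar' : par^[n] (par j) = r := by
          rw [← Function.iterate_succ_apply]; exact hj
        have h1 := ih (par j) hpar' a ω (fun m => by
          have := hm (m + 1)
          rwa [Function.iterate_succ_apply] at this)
        have h2 : ⟪ρ a ω, ρ j ω⟫_ℂ = 0 :=
          horth ω a j (Ne.symm (by simpa using hm 0))
        rw [h1, h2]; ring
  -- signals are everywhere nonzero
  have hXne : ∀ (k : V) (ω : ℝ), X k ω ≠ 0 := by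
    intro k ω hk0
    by_cases hkr : k = r
    · subst hkr
      exact hwp k ω (by rw [← hXr]; exact hk0)
    · have hz : ⟪ρ k ω, X k ω⟫_ℂ = 0 := by rw [hk0]; simp
      rw [hX k hkr ω, inner_add_right, inner_smul_right] at hz
      obtain ⟨n, hn⟩ := hreach k
      obtain ⟨n', rfl⟩ : ∃ n', n = n' + 1 := by
        cases n with
        | zero => exact absurd (by simpa using hn) hkr
        | succ n' => exact ⟨n', rfl⟩
      have hpk : par^[n'] (par k) = r := by
        rw [← Function.iterate_succ_apply]; exact hn
      have h1 : ⟪ρ k ω, X (par k) ω⟫_ℂ = 0 := by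
        refine horthX n' (par k) hpk k ω (fun m => ?_)
        have := hnc k hkr m
        rwa [Function.iterate_succ_apply] at this
      rw [h1, mul_zero, zero_add, inner_self_eq_zero] at hz
      exact hwp k ω hz
  have hXiNorm : ∀ ω : ℝ, ((‖X i ω‖ ^ 2 : ℝ) : ℂ) ≠ 0 := by
    intro ω
    exact_mod_cast pow_ne_zero 2 (norm_ne_zero_iff.mpr (hXne i ω))
  -- ρ a ⊥ X i for a ∉ {i, r}
  have hρiX : ∀ (ω : ℝ) (a : V), a ≠ i → a ≠ r → ⟪ρ a ω, X i ω⟫_ℂ = 0 := by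
    intro ω a hai har
    refine horthX 1 i (by simpa using hpari) a ω ?_
    intro m
    cases m with
    | zero => simpa using Ne.symm hai
    | succ m =>
      have he : par^[m + 1] i = r := by
        rw [Function.iterate_succ_apply, hpari, hfix]
      rw [he]; exact Ne.symm har
  -- Wiener orthogonality
  have hWiener : ∀ ω : ℝ, ⟪X i ω, ρs r ω⟫_ℂ = 0 := by
    intro ω
    rw [hρsr ω, inner_sub_right, inner_smul_right, hhsr]
    have hinner : ⟪X i ω, X i ω⟫_ℂ = ((‖X i ω‖ ^ 2 : ℝ) : ℂ) := by
      rw [inner_self_eq_norm_sq_to_K]; norm_cast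
    rw [hinner, div_mul_cancel₀ _ (hXiNorm ω), sub_self]
  have hρρsr : ∀ (ω : ℝ) (a : V), a ≠ i → a ≠ r → ⟪ρ a ω, ρs r ω⟫_ℂ = 0 := by
    intro ω a hai har
    rw [hρsr ω, inner_sub_right, inner_smul_right, hρiX ω a hai har, mul_zero,
      sub_zero, hXr]
    exact horth ω a r har
  -- the new root noise is nonzero
  have hρsrne : ∀ ω : ℝ, ρs r ω ≠ 0 := by
    intro ω h0
    have heq : X r ω = hs r ω • X i ω := by
      have := hρsr ω
      rw [h0] at this
      exact (sub_eq_zero.mp this.symm)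
    have h1 : ⟪ρ i ω, X r ω⟫_ℂ = 0 := by
      rw [hXr]; exact horth ω i r hir
    rw [heq, inner_smul_right] at h1
    have h2 : ⟪ρ i ω, X i ω⟫_ℂ ≠ 0 := by
      rw [hX i hir ω, hpari, inner_add_right, inner_smul_right, hXr,
        horth ω i r hir, mul_zero, zero_add]
      simpa [inner_self_eq_zero] using hwp i ω
    have hc : hs r ω = 0 := by
      rcases mul_eq_zero.mp h1 with hh | hh
      exacts [hh, absurd hh h2]
    rw [hc, zero_smul] at heq
    exact hXne r ω heq
  refine ⟨⟨hparsi, ?_, ?_, ?_⟩, ?_, ?_, fun ω => (hρsi ω).symm, ?_⟩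
  · -- (a2)
    intro k hk
    by_cases hkr : k = r
    · subst hkr; rw [hparsr]; exact hir
    · rw [hparso k hk hkr]; exact hpar k hkr
  · -- (a3) reachability
    have key : ∀ (n : ℕ) (k : V), par^[n] k = r → ∃ m, pars^[m] k = i := by
      intro n
      induction n with
      | zero =>
        intro k hk
        simp only [Function.iterate_zero, id_eq] at hk
        subst hk
        exact ⟨1, by simpa using hparsr⟩
      | succ n ih =>
        intro k hk
        by_cases hki : k = i
        · exact ⟨0, by simpa using hki⟩
        by_cases hkr : k = r
        · subst hkr; exact ⟨1, by simpa using hparsr⟩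
        · obtain ⟨m, hm⟩ := ih (par k) (by rw [← Function.iterate_succ_apply]; exact hk)
          exact ⟨m + 1, by rw [Function.iterate_succ_apply, hparso k hki hkr, hm]⟩
    intro k
    obtain ⟨n, hn⟩ := hreach k
    exact key n k hn
  · -- (a4) same edge set
    ext e
    simp only [Set.mem_setOf_eq]
    constructor
    · rintro ⟨k, hk, rfl⟩
      by_cases hkr : k = r
      · subst hkr
        exact ⟨i, hir, by rw [hparsr, hpari]; exact Sym2.eq_swap⟩
      · exact ⟨k, hkr, by rw [hparso k hk hkr]⟩
    · rintro ⟨k, hk, rfl⟩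
      by_cases hki : k = i
      · subst hki
        exact ⟨r, Ne.symm hir, by rw [hparsr, hpari]; exact Sym2.eq_swap⟩
      · exact ⟨k, hki, by rw [hparso k hki hk]⟩
  · -- (b) orthogonality
    intro ω a b hab
    by_cases hai : a = i
    · subst hai
      rw [hρsi]
      by_cases hbr : b = r
      · subst hbr; exact hWiener ω
      · rw [hρso b (Ne.symm hab) hbr]
        exact inner_eq_zero_symm.mp (hρiX ω b (Ne.symm hab) hbr)
    by_cases har : a = r
    · subst har
      by_cases hbi : b = i
      · subst hbi; rw [hρsi]
        exact inner_eq_zero_symm.mp (hWiener ω)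
      · rw [hρso b hbi (Ne.symm hab)]
        exact inner_eq_zero_symm.mp (hρρsr ω b hbi (Ne.symm hab))
    · rw [hρso a hai har]
      by_cases hbi : b = i
      · subst hbi; rw [hρsi]; exact hρiX ω a hai har
      by_cases hbr : b = r
      · subst hbr; exact hρρsr ω a hai har
      · rw [hρso b hbi hbr]; exact horth ω a b hab
  · -- (c) well-posedness
    intro k ω
    by_cases hki : k = i
    · subst hki; rw [hρsi]; exact hXne k ω
    by_cases hkr : k = r
    · subst hkr; exact hρsrne ω
    · rw [hρso k hki hkr]; exact hwp k ω
  · -- (d) recursion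
    intro k hk ω
    by_cases hkr : k = r
    · subst hkr
      rw [hparsr, hρsr]
      abel
    · rw [hparso k hk hkr, hhso k hk hkr, hρso k hk hkr]
      exact hX k hkr ω
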